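/- arXiv:1508.03971 — 3 statements merged into one kernel-verified Lean document; each statement's English description precedes it below -/
import Mathlib

section
/- Let G₁ and G₂ be finite nonempty simple graphs and let G = G₁ + G₂ be their join. Then the clique graph K(G) is a complete graph if and only if K(G₁) is complete or K(G₂) is complete. -/
open SimpleGraph

universe u v

/-- A clique (maximal complete subgraph) of `G`, viewed as a vertex set. -/
def IsMaxClique {V : Type u} (G : SimpleGraph V) (s : Set V) : Prop :=
  G.IsClique s ∧ ∀ t : Set V, G.IsClique t → s ⊆ t → s = t

/-- The set of all cliques (maximal complete subgraphs) of `G`. -/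
def maxCliques {V : Type u} (G : SimpleGraph V) : Set (Set V) :=
  {s | IsMaxClique G s}

/-- The clique graph `K(G)`: vertices are the cliques of `G`, two distinct cliques
being adjacent iff they intersect. -/
def cliqueGraph {V : Type u} (G : SimpleGraph V) : SimpleGraph ↥(maxCliques G) where
  Adj Q R := Q ≠ R ∧ ((Q : Set V) ∩ (R : Set V)).Nonempty
  symm := ⟨by
    intro Q R h
    refine ⟨h.1.symm, ?_⟩
    rw [Set.inter_comm]
    exact h.2⟩
  loopless := ⟨fun Q h => h.1 rfl⟩

/-- A graph is complete iff any two distinct vertices are adjacent. -/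
def IsCompleteGraph {V : Type u} (G : SimpleGraph V) : Prop :=
  ∀ x y : V, x ≠ y → G.Adj x y

/-- The join `G₁ + G₂` of two graphs on disjoint vertex sets: all edges of `G₁`
and of `G₂`, plus all edges between the two vertex sets. -/
def joinGraph {V₁ : Type u} {V₂ : Type v} (G₁ : SimpleGraph V₁) (G₂ : SimpleGraph V₂) :
    SimpleGraph (V₁ ⊕ V₂) where
  Adj x y :=
    match x, y with
    | Sum.inl a, Sum.inl b => G₁.Adj a b
    | Sum.inr a, Sum.inr b => G₂.Adj a b
    | Sum.inl _, Sum.inr _ => True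
    | Sum.inr _, Sum.inl _ => True
  symm := ⟨by rintro (a | a) (b | b) h <;> first | exact h.symm | trivial⟩
  loopless := ⟨by rintro (a | a) h <;> exact (SimpleGraph.irrefl _) h⟩

lemma preimage_inl_union {V₁ : Type u} {V₂ : Type v} (A : Set V₁) (B : Set V₂) :
    Sum.inl ⁻¹' (Sum.inl '' A ∪ Sum.inr '' B) = A := by
  ext a; simp

lemma preimage_inr_union {V₁ : Type u} {V₂ : Type v} (A : Set V₁) (B : Set V₂) :
    Sum.inr ⁻¹' (Sum.inl '' A ∪ Sum.inr '' B) = B := by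
  ext a; simp

lemma join_isClique_iff {V₁ V₂ : Type u} (G₁ : SimpleGraph V₁) (G₂ : SimpleGraph V₂)
    (s : Set (V₁ ⊕ V₂)) :
    (joinGraph G₁ G₂).IsClique s ↔
      G₁.IsClique (Sum.inl ⁻¹' s) ∧ G₂.IsClique (Sum.inr ⁻¹' s) := by
  constructor
  · intro h
    constructor
    · intro a ha b hb hne
      exact h ha hb (fun e => hne (Sum.inl.inj e))
    · intro a ha b hb hne
      exact h ha hb (fun e => hne (Sum.inr.inj e))
  · rintro ⟨h1, h2⟩ x hx y hy hne
    cases x with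
    | inl a =>
      cases y with
      | inl b => exact h1 hx hy (fun e => hne (by rw [e]))
      | inr b => trivial
    | inr a =>
      cases y with
      | inl b => trivial
      | inr b => exact h2 hx hy (fun e => hne (by rw [e]))

lemma sum_decomp {V₁ V₂ : Type u} (s : Set (V₁ ⊕ V₂)) :
    s = Sum.inl '' (Sum.inl ⁻¹' s) ∪ Sum.inr '' (Sum.inr ⁻¹' s) := by
  ext x
  cases x with
  | inl a => simp
  | inr a => simp

lemma join_isMaxClique_iff {V₁ V₂ : Type u} (G₁ : SimpleGraph V₁) (G₂ : SimpleGraph V₂)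
    (s : Set (V₁ ⊕ V₂)) :
    IsMaxClique (joinGraph G₁ G₂) s ↔
      IsMaxClique G₁ (Sum.inl ⁻¹' s) ∧ IsMaxClique G₂ (Sum.inr ⁻¹' s) := by
  constructor
  · rintro ⟨hc, hmax⟩
    obtain ⟨hc1, hc2⟩ := (join_isClique_iff G₁ G₂ s).mp hc
    refine ⟨⟨hc1, ?_⟩, ⟨hc2, ?_⟩⟩
    · intro t ht hsub
      set t' : Set (V₁ ⊕ V₂) := Sum.inl '' t ∪ Sum.inr '' (Sum.inr ⁻¹' s) with ht'
      have hct' : (joinGraph G₁ G₂).IsClique t' := by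
        rw [join_isClique_iff, ht', preimage_inl_union, preimage_inr_union]
        exact ⟨ht, hc2⟩
      have hst' : s ⊆ t' := by
        rw [sum_decomp s, ht']
        exact Set.union_subset_union_left _ (Set.image_mono hsub)
      have := hmax t' hct' hst'
      rw [this, ht', preimage_inl_union]
    · intro t ht hsub
      set t' : Set (V₁ ⊕ V₂) := Sum.inl '' (Sum.inl ⁻¹' s) ∪ Sum.inr '' t with ht'
      have hct' : (joinGraph G₁ G₂).IsClique t' := by
        rw [join_isClique_iff, ht', preimage_inl_union, preimage_inr_union]
        exact ⟨hc1, ht⟩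
      have hst' : s ⊆ t' := by
        rw [sum_decomp s, ht']
        exact Set.union_subset_union_right _ (Set.image_mono hsub)
      have := hmax t' hct' hst'
      rw [this, ht', preimage_inr_union]
  · rintro ⟨⟨hc1, hm1⟩, ⟨hc2, hm2⟩⟩
    refine ⟨(join_isClique_iff G₁ G₂ s).mpr ⟨hc1, hc2⟩, ?_⟩
    intro t ht hsub
    obtain ⟨ht1, ht2⟩ := (join_isClique_iff G₁ G₂ t).mp ht
    have e1 := hm1 _ ht1 (Set.preimage_mono hsub)
    have e2 := hm2 _ ht2 (Set.preimage_mono hsub)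
    rw [sum_decomp s, sum_decomp t, e1, e2]

lemma maxClique_nonempty {V : Type u} [Nonempty V] {G : SimpleGraph V} {s : Set V}
    (h : IsMaxClique G s) : s.Nonempty := by
  by_contra he
  rw [Set.not_nonempty_iff_eq_empty] at he
  obtain ⟨v⟩ := ‹Nonempty V›
  have := h.2 {v} (by intro a ha b hb hne; simp at ha hb; exact absurd (ha.trans hb.symm) hne)
    (by rw [he]; exact Set.empty_subset _)
  rw [he] at this
  exact (Set.singleton_nonempty v).ne_empty this.symm

/-- The clique graph of a join `G₁ + G₂` is complete iff the clique graph of `G₁`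
is complete or the clique graph of `G₂` is complete. -/
theorem cliqueGraph_join_complete_iff {V₁ V₂ : Type u} [Finite V₁] [Finite V₂]
    [Nonempty V₁] [Nonempty V₂] (G₁ : SimpleGraph V₁) (G₂ : SimpleGraph V₂) :
    IsCompleteGraph (cliqueGraph (joinGraph G₁ G₂)) ↔
      IsCompleteGraph (cliqueGraph G₁) ∨ IsCompleteGraph (cliqueGraph G₂) := by
  constructor
  · intro h
    by_contra hn
    push_neg at hn
    obtain ⟨hn1, hn2⟩ := hn
    simp only [IsCompleteGraph, not_forall] at hn1 hn2
    obtain ⟨A, A', hne1, hna1⟩ := hn1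
    obtain ⟨B, B', hne2, hna2⟩ := hn2
    have hd1 : ((A : Set V₁) ∩ (A' : Set V₁)) = ∅ := by
      by_contra hd
      exact hna1 ⟨hne1, Set.nonempty_iff_ne_empty.mpr hd⟩
    have hd2 : ((B : Set V₂) ∩ (B' : Set V₂)) = ∅ := by
      by_contra hd
      exact hna2 ⟨hne2, Set.nonempty_iff_ne_empty.mpr hd⟩
    set Q : Set (V₁ ⊕ V₂) := Sum.inl '' (A : Set V₁) ∪ Sum.inr '' (B : Set V₂) with hQdef
    set R : Set (V₁ ⊕ V₂) := Sum.inl '' (A' : Set V₁) ∪ Sum.inr '' (B' : Set V₂) with hRdef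
    have hQ : Q ∈ maxCliques (joinGraph G₁ G₂) := by
      show IsMaxClique _ _
      rw [join_isMaxClique_iff, hQdef, preimage_inl_union, preimage_inr_union]
      exact ⟨A.2, B.2⟩
    have hR : R ∈ maxCliques (joinGraph G₁ G₂) := by
      show IsMaxClique _ _
      rw [join_isMaxClique_iff, hRdef, preimage_inl_union, preimage_inr_union]
      exact ⟨A'.2, B'.2⟩
    have hQR : (⟨Q, hQ⟩ : ↥(maxCliques (joinGraph G₁ G₂))) ≠ ⟨R, hR⟩ := by
      intro e
      apply hne1
      have : Q = R := congrArg Subtype.val e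
      have h2 : Sum.inl ⁻¹' Q = Sum.inl ⁻¹' R := by rw [this]
      rw [hQdef, hRdef, preimage_inl_union, preimage_inl_union] at h2
      exact Subtype.coe_injective h2
    obtain ⟨x, hxQ, hxR⟩ := (h ⟨Q, hQ⟩ ⟨R, hR⟩ hQR).2
    cases x with
    | inl a =>
      simp only [hQdef, hRdef, Set.mem_union, Set.mem_image] at hxQ hxR
      obtain ⟨a1, ha1, e1⟩ | ⟨b1, _, e1⟩ := hxQ
      · obtain ⟨a2, ha2, e2⟩ | ⟨b2, _, e2⟩ := hxR
        · have : a ∈ (A : Set V₁) ∩ (A' : Set V₁) :=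
            ⟨Sum.inl.inj e1 ▸ ha1, Sum.inl.inj e2 ▸ ha2⟩
          rw [hd1] at this
          exact this
        · exact nomatch e2
      · exact nomatch e1
    | inr b =>
      simp only [hQdef, hRdef, Set.mem_union, Set.mem_image] at hxQ hxR
      obtain ⟨a1, _, e1⟩ | ⟨b1, hb1, e1⟩ := hxQ
      · exact nomatch e1
      · obtain ⟨a2, _, e2⟩ | ⟨b2, hb2, e2⟩ := hxR
        · exact nomatch e2
        · have : b ∈ (B : Set V₂) ∩ (B' : Set V₂) :=
            ⟨Sum.inr.inj e1 ▸ hb1, Sum.inr.inj e2 ▸ hb2⟩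
          rw [hd2] at this
          exact this
  · rintro (h1 | h2)
    · intro Q R hne
      refine ⟨hne, ?_⟩
      obtain ⟨hQ1, _⟩ := (join_isMaxClique_iff G₁ G₂ _).mp Q.2
      obtain ⟨hR1, _⟩ := (join_isMaxClique_iff G₁ G₂ _).mp R.2
      by_cases he : Sum.inl ⁻¹' (Q : Set (V₁ ⊕ V₂)) = Sum.inl ⁻¹' (R : Set (V₁ ⊕ V₂))
      · obtain ⟨a, ha⟩ := maxClique_nonempty hQ1
        have ha' : a ∈ Sum.inl ⁻¹' (R : Set (V₁ ⊕ V₂)) := he ▸ ha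
        exact ⟨Sum.inl a, ha, ha'⟩
      · have hadj := h1 ⟨_, hQ1⟩ ⟨_, hR1⟩ (fun e => he (congrArg Subtype.val e))
        obtain ⟨a, ha1, ha2⟩ := hadj.2
        exact ⟨Sum.inl a, ha1, ha2⟩
    · intro Q R hne
      refine ⟨hne, ?_⟩
      obtain ⟨_, hQ2⟩ := (join_isMaxClique_iff G₁ G₂ _).mp Q.2
      obtain ⟨_, hR2⟩ := (join_isMaxClique_iff G₁ G₂ _).mp R.2
      by_cases he : Sum.inr ⁻¹' (Q : Set (V₁ ⊕ V₂)) = Sum.inr ⁻¹' (R : Set (V₁ ⊕ V₂))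
      · obtain ⟨b, hb⟩ := maxClique_nonempty hQ2
        have hb' : b ∈ Sum.inr ⁻¹' (R : Set (V₁ ⊕ V₂)) := he ▸ hb
        exact ⟨Sum.inr b, hb, hb'⟩
      · have hadj := h2 ⟨_, hQ2⟩ ⟨_, hR2⟩ (fun e => he (congrArg Subtype.val e))
        obtain ⟨b, hb1, hb2⟩ := hadj.2
        exact ⟨Sum.inr b, hb1, hb2⟩
end

section
/- Let G₁ and G₂ be finite clique-Helly simple graphs, each having at least two vertices and no isolated vertices, and let G = G₁ □ G₂ be their Cartesian product. Then K²(G) ≅ G. -/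
open SimpleGraph

set_option linter.unusedSectionVars false

universe u v

/-- A finite simple graph bundled with its vertex type. -/
structure BGraph : Type (u + 1) where
  V : Type u
  [finV : Finite V]
  graph : SimpleGraph V

attribute [instance] BGraph.finV

/-- Bundle a finite simple graph. -/
def BGraph.of {V : Type u} [Finite V] (G : SimpleGraph V) : BGraph.{u} :=
  { V := V, graph := G }

/-- The bundled clique graph operator `K`; iterated clique graphs are `KB^[n]`. -/
def KB : BGraph.{u} → BGraph.{u} :=
  fun H => { V := ↥(maxCliques H.graph), graph := cliqueGraph H.graph }

/-- A graph is `K`-convergent if its sequence of iterated clique graphs is finite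
up to isomorphism, i.e. two of its iterated clique graphs are isomorphic. -/
def KConvergent (H : BGraph.{u}) : Prop :=
  ∃ m n : ℕ, m < n ∧ Nonempty ((KB^[n] H).graph ≃g (KB^[m] H).graph)

/-- A graph is `K`-periodic if `Kⁿ(G) ≅ G` for some `n > 0`. -/
def KPeriodic (H : BGraph.{u}) : Prop :=
  ∃ n : ℕ, 0 < n ∧ Nonempty ((KB^[n] H).graph ≃g H.graph)

/-- A graph is clique-Helly if every nonempty family of pairwise intersecting cliques
has nonempty total intersection. -/
def CliqueHelly {V : Type u} (G : SimpleGraph V) : Prop :=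
  ∀ F : Set (Set V), F.Nonempty → (∀ s ∈ F, s ∈ maxCliques G) →
    (∀ s ∈ F, ∀ t ∈ F, (s ∩ t).Nonempty) → (⋂ s ∈ F, s).Nonempty

section AuxLemmas

variable {V : Type u} {W : Type v}

lemma exists_maxClique_superset [Finite V] (G : SimpleGraph V) {s : Set V}
    (hs : G.IsClique s) : ∃ t ∈ maxCliques G, s ⊆ t := by
  obtain ⟨t, ⟨ht, hst⟩, hmax⟩ := Set.Finite.exists_maximalFor id
    {t : Set V | G.IsClique t ∧ s ⊆ t} (Set.toFinite _) ⟨s, hs, subset_rfl⟩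
  exact ⟨t, ⟨ht, fun u hu htu => le_antisymm htu (hmax ⟨hu, hst.trans htu⟩ htu)⟩, hst⟩

lemma exists_point_maxClique [Finite V] {G : SimpleGraph V}
    (hiso : ∀ v : V, ∃ u : V, G.Adj v u) (v : V) : ∃ Q ∈ maxCliques G, v ∈ Q := by
  obtain ⟨u, hu⟩ := hiso v
  obtain ⟨t, ht, hsub⟩ := exists_maxClique_superset G
    ((SimpleGraph.isClique_pair).2 fun _ => hu)
  exact ⟨t, ht, hsub (Set.mem_insert _ _)⟩

lemma maxClique_nonempty_s14 [Nonempty V] {G : SimpleGraph V} {Q : Set V}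
    (hQ : Q ∈ maxCliques G) : Q.Nonempty := by
  by_contra h
  rw [Set.not_nonempty_iff_eq_empty] at h
  obtain ⟨v⟩ := ‹Nonempty V›
  have := hQ.2 {v} (by simp) (h ▸ Set.empty_subset _)
  rw [h] at this
  exact Set.singleton_ne_empty v this.symm

lemma maxClique_nontrivial [Nonempty V] {G : SimpleGraph V}
    (hiso : ∀ v : V, ∃ u : V, G.Adj v u) {Q : Set V}
    (hQ : Q ∈ maxCliques G) : ∃ a ∈ Q, ∃ b ∈ Q, a ≠ b := by
  obtain ⟨a, ha⟩ := maxClique_nonempty_s14 hQ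
  by_contra h
  push_neg at h
  obtain ⟨u, hu⟩ := hiso a
  have hQsub : Q ⊆ {a, u} := fun b hb => by
    rw [h b hb a ha]; exact Set.mem_insert _ _
  have := hQ.2 {a, u} ((SimpleGraph.isClique_pair).2 fun _ => hu) hQsub
  have huQ : u ∈ Q := this ▸ (Set.mem_insert_iff.2 (Or.inr rfl))
  exact hu.ne' (h u huQ a ha)

lemma clique_coord {G₁ : SimpleGraph V} {G₂ : SimpleGraph W} {s : Set (V × W)}
    (hs : (G₁ □ G₂).IsClique s) {x y : V × W} (hx : x ∈ s) (hy : y ∈ s) :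
    x.1 = y.1 ∨ x.2 = y.2 := by
  by_cases hxy : x = y
  · exact Or.inl (by rw [hxy])
  · rcases (SimpleGraph.boxProd_adj).1 (hs hx hy hxy) with ⟨_, h2⟩ | ⟨_, h1⟩
    · exact Or.inr h2
    · exact Or.inl h1

lemma clique_line {G₁ : SimpleGraph V} {G₂ : SimpleGraph W} {s : Set (V × W)}
    (hs : (G₁ □ G₂).IsClique s) :
    (∀ x ∈ s, ∀ y ∈ s, x.2 = y.2) ∨ (∀ x ∈ s, ∀ y ∈ s, x.1 = y.1) := by
  by_cases h : ∀ x ∈ s, ∀ y ∈ s, x.2 = y.2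
  · exact Or.inl h
  · push_neg at h
    obtain ⟨x, hx, y, hy, hxy2⟩ := h
    have hxy1 : x.1 = y.1 := (clique_coord hs hx hy).resolve_right hxy2
    have key : ∀ z ∈ s, z.1 = x.1 := by
      intro z hz
      rcases clique_coord hs hz hx with h1 | h2
      · exact h1
      · rcases clique_coord hs hz hy with h1' | h2'
        · exact h1'.trans hxy1.symm
        · exact absurd (h2 ▸ h2') hxy2
    exact Or.inr fun z hz w hw => (key z hz).trans (key w hw).symm

lemma prod_isClique_h {G₁ : SimpleGraph V} {G₂ : SimpleGraph W} {Q : Set V}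
    (hQ : G₁.IsClique Q) (h : W) : (G₁ □ G₂).IsClique (Q ×ˢ ({h} : Set W)) := by
  rintro ⟨a, b⟩ ⟨ha, hb⟩ ⟨c, d⟩ ⟨hc, hd⟩ hne
  simp only [Set.mem_singleton_iff] at hb hd
  subst hb; subst hd
  have hac : a ≠ c := fun h' => hne (by rw [h'])
  exact (SimpleGraph.boxProd_adj).2 (Or.inl ⟨hQ ha hc hac, rfl⟩)

lemma prod_isClique_v {G₁ : SimpleGraph V} {G₂ : SimpleGraph W} {R : Set W}
    (hR : G₂.IsClique R) (g : V) : (G₁ □ G₂).IsClique (({g} : Set V) ×ˢ R) := by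
  rintro ⟨a, b⟩ ⟨ha, hb⟩ ⟨c, d⟩ ⟨hc, hd⟩ hne
  simp only [Set.mem_singleton_iff] at ha hc
  subst ha; subst hc
  have hbd : b ≠ d := fun h' => hne (by rw [h'])
  exact (SimpleGraph.boxProd_adj).2 (Or.inr ⟨hR hb hd hbd, rfl⟩)

lemma clique_fst_image {G₁ : SimpleGraph V} {G₂ : SimpleGraph W} {t : Set (V × W)}
    (ht : (G₁ □ G₂).IsClique t) (hlev : ∀ x ∈ t, ∀ y ∈ t, x.2 = y.2) :
    G₁.IsClique (Prod.fst '' t) := by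
  rintro a ⟨x, hx, rfl⟩ b ⟨y, hy, rfl⟩ hab
  have hxy : x ≠ y := fun h' => hab (by rw [h'])
  rcases (SimpleGraph.boxProd_adj).1 (ht hx hy hxy) with ⟨h1, _⟩ | ⟨h2, _⟩
  · exact h1
  · exact absurd (hlev x hx y hy ▸ h2) (G₂.irrefl)

lemma clique_snd_image {G₁ : SimpleGraph V} {G₂ : SimpleGraph W} {t : Set (V × W)}
    (ht : (G₁ □ G₂).IsClique t) (hcol : ∀ x ∈ t, ∀ y ∈ t, x.1 = y.1) :
    G₂.IsClique (Prod.snd '' t) := by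
  rintro a ⟨x, hx, rfl⟩ b ⟨y, hy, rfl⟩ hab
  have hxy : x ≠ y := fun h' => hab (by rw [h'])
  rcases (SimpleGraph.boxProd_adj).1 (ht hx hy hxy) with ⟨h1, _⟩ | ⟨h2, _⟩
  · exact absurd (hcol x hx y hy ▸ h1) (G₁.irrefl)
  · exact h2

lemma prod_maxClique_h {G₁ : SimpleGraph V} {G₂ : SimpleGraph W} {Q : Set V} {h : W}
    (hQ : Q ∈ maxCliques G₁) (hQ2 : ∃ a ∈ Q, ∃ b ∈ Q, a ≠ b) :
    (Q ×ˢ ({h} : Set W)) ∈ maxCliques (G₁ □ G₂) := by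
  obtain ⟨a, ha, b, hb, hab⟩ := hQ2
  refine ⟨prod_isClique_h hQ.1 h, fun t ht hsub => ?_⟩
  have hat : (a, h) ∈ t := hsub ⟨ha, rfl⟩
  have hbt : (b, h) ∈ t := hsub ⟨hb, rfl⟩
  have hlevel : ∀ z ∈ t, z.2 = h := by
    intro z hz
    rcases clique_coord ht hz hat with h1 | h2
    · rcases clique_coord ht hz hbt with h1' | h2'
      · exact absurd (h1.symm.trans h1') hab
      · exact h2'
    · exact h2
  have himg : t = (Prod.fst '' t) ×ˢ ({h} : Set W) := by
    ext ⟨x, y⟩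
    constructor
    · intro hxy
      exact ⟨⟨(x, y), hxy, rfl⟩, hlevel _ hxy⟩
    · rintro ⟨⟨⟨x', y'⟩, hz, hx⟩, hy⟩
      simp only at hx
      simp only [Set.mem_singleton_iff] at hy
      have hy' := hlevel _ hz
      simp only at hy'
      subst hx; subst hy
      rwa [← hy']
  have hQ' : Q = Prod.fst '' t :=
    hQ.2 _ (clique_fst_image ht fun x hx y hy => (hlevel x hx).trans (hlevel y hy).symm)
      (fun q hq => ⟨(q, h), hsub ⟨hq, rfl⟩, rfl⟩)
  rw [himg, ← hQ']

lemma prod_maxClique_v {G₁ : SimpleGraph V} {G₂ : SimpleGraph W} {R : Set W} {g : V}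
    (hR : R ∈ maxCliques G₂) (hR2 : ∃ a ∈ R, ∃ b ∈ R, a ≠ b) :
    (({g} : Set V) ×ˢ R) ∈ maxCliques (G₁ □ G₂) := by
  obtain ⟨a, ha, b, hb, hab⟩ := hR2
  refine ⟨prod_isClique_v hR.1 g, fun t ht hsub => ?_⟩
  have hat : (g, a) ∈ t := hsub ⟨rfl, ha⟩
  have hbt : (g, b) ∈ t := hsub ⟨rfl, hb⟩
  have hcol : ∀ z ∈ t, z.1 = g := by
    intro z hz
    rcases clique_coord ht hz hat with h1 | h2
    · exact h1
    · rcases clique_coord ht hz hbt with h1' | h2'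
      · exact h1'
      · exact absurd (h2.symm.trans h2') hab
  have himg : t = ({g} : Set V) ×ˢ (Prod.snd '' t) := by
    ext ⟨x, y⟩
    constructor
    · intro hxy
      exact ⟨hcol _ hxy, ⟨(x, y), hxy, rfl⟩⟩
    · rintro ⟨hx, ⟨⟨x', y'⟩, hz, hy⟩⟩
      simp only at hy
      simp only [Set.mem_singleton_iff] at hx
      have hx' := hcol _ hz
      simp only at hx'
      subst hy; subst hx
      rwa [← hx']
  have hR' : R = Prod.snd '' t :=
    hR.2 _ (clique_snd_image ht fun x hx y hy => (hcol x hx).trans (hcol y hy).symm)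
      (fun r hr => ⟨(g, r), hsub ⟨rfl, hr⟩, rfl⟩)
  rw [himg, ← hR']

lemma maxClique_cases [Nonempty V] [Nonempty W] {G₁ : SimpleGraph V} {G₂ : SimpleGraph W}
    {C : Set (V × W)} (hC : C ∈ maxCliques (G₁ □ G₂)) :
    (∃ Q ∈ maxCliques G₁, ∃ h : W, C = Q ×ˢ ({h} : Set W)) ∨
    (∃ g : V, ∃ R ∈ maxCliques G₂, C = ({g} : Set V) ×ˢ R) := by
  obtain ⟨x, hx⟩ := maxClique_nonempty_s14 hC
  rcases clique_line hC.1 with hall | hall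
  · left
    have hCeq : C = (Prod.fst '' C) ×ˢ ({x.2} : Set W) := by
      ext ⟨a, b⟩
      constructor
      · intro hab
        exact ⟨⟨(a, b), hab, rfl⟩, hall (a, b) hab x hx⟩
      · rintro ⟨⟨⟨a', b'⟩, hz, ha⟩, hb⟩
        simp only at ha
        simp only [Set.mem_singleton_iff] at hb
        have hb' : b' = x.2 := hall (a', b') hz x hx
        subst ha; subst hb
        rwa [← hb']
    refine ⟨Prod.fst '' C, ⟨clique_fst_image hC.1 fun z hz w hw =>
      (hall z hz x hx).trans (hall w hw x hx).symm, ?_⟩, x.2, hCeq⟩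
    intro Q' hQ' hsub
    have hsub2 : C ⊆ Q' ×ˢ ({x.2} : Set W) := by
      rw [hCeq]; exact Set.prod_mono hsub subset_rfl
    have heq := hC.2 _ (prod_isClique_h hQ' x.2) hsub2
    rw [heq, Set.fst_image_prod _ (Set.singleton_nonempty _)]
  · right
    have hCeq : C = ({x.1} : Set V) ×ˢ (Prod.snd '' C) := by
      ext ⟨a, b⟩
      constructor
      · intro hab
        exact ⟨hall (a, b) hab x hx, ⟨(a, b), hab, rfl⟩⟩
      · rintro ⟨ha, ⟨⟨a', b'⟩, hz, hb⟩⟩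
        simp only at hb
        simp only [Set.mem_singleton_iff] at ha
        have ha' : a' = x.1 := hall (a', b') hz x hx
        subst hb; subst ha
        rwa [← ha']
    refine ⟨x.1, Prod.snd '' C, ⟨clique_snd_image hC.1 fun z hz w hw =>
      (hall z hz x hx).trans (hall w hw x hx).symm, ?_⟩, hCeq⟩
    intro R' hR' hsub
    have hsub2 : C ⊆ ({x.1} : Set V) ×ˢ R' := by
      rw [hCeq]; exact Set.prod_mono subset_rfl hsub
    have heq := hC.2 _ (prod_isClique_v hR' x.1) hsub2
    rw [heq, Set.snd_image_prod (Set.singleton_nonempty _)]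

end AuxLemmas

section Main

variable {V₁ V₂ : Type u} [Finite V₁] [Finite V₂] [Nontrivial V₁] [Nontrivial V₂]
  {G₁ : SimpleGraph V₁} {G₂ : SimpleGraph V₂}

/-- The family of all maximal cliques of `G₁ □ G₂` through the point `(g, h)`. -/
def Fam (G₁ : SimpleGraph V₁) (G₂ : SimpleGraph V₂) (g : V₁) (h : V₂) :
    Set ↥(maxCliques (G₁ □ G₂)) :=
  {C | (g, h) ∈ (C : Set (V₁ × V₂))}

lemma Fam_isClique (g : V₁) (h : V₂) :
    (cliqueGraph (G₁ □ G₂)).IsClique (Fam G₁ G₂ g h) :=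
  fun _ hC _ hD hne => ⟨hne, ⟨(g, h), hC, hD⟩⟩

lemma exists_Fam_h (hiso₁ : ∀ v : V₁, ∃ u : V₁, G₁.Adj v u) (g : V₁) (h : V₂) :
    ∃ C ∈ Fam G₁ G₂ g h, ∃ Q ∈ maxCliques G₁, g ∈ Q ∧
      (C : Set (V₁ × V₂)) = Q ×ˢ ({h} : Set V₂) := by
  obtain ⟨Q, hQ, hg⟩ := exists_point_maxClique hiso₁ g
  have hmax := prod_maxClique_h (G₂ := G₂) (h := h) hQ (maxClique_nontrivial hiso₁ hQ)
  exact ⟨⟨_, hmax⟩, ⟨hg, rfl⟩, Q, hQ, hg, rfl⟩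

lemma exists_Fam_v (hiso₂ : ∀ v : V₂, ∃ u : V₂, G₂.Adj v u) (g : V₁) (h : V₂) :
    ∃ C ∈ Fam G₁ G₂ g h, ∃ R ∈ maxCliques G₂, h ∈ R ∧
      (C : Set (V₁ × V₂)) = ({g} : Set V₁) ×ˢ R := by
  obtain ⟨R, hR, hh⟩ := exists_point_maxClique hiso₂ h
  have hmax := prod_maxClique_v (G₁ := G₁) (g := g) hR (maxClique_nontrivial hiso₂ hR)
  exact ⟨⟨_, hmax⟩, ⟨rfl, hh⟩, R, hR, hh, rfl⟩

lemma common_point {T : Set ↥(maxCliques (G₁ □ G₂))}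
    (hT : (cliqueGraph (G₁ □ G₂)).IsClique T) {Q : Set V₁} {R : Set V₂} {g : V₁} {h : V₂}
    (hC₁ : ∃ C₁ ∈ T, (C₁ : Set (V₁ × V₂)) = Q ×ˢ ({h} : Set V₂))
    (hC₂ : ∃ C₂ ∈ T, (C₂ : Set (V₁ × V₂)) = ({g} : Set V₁) ×ˢ R)
    (hg : g ∈ Q) (hh : h ∈ R) : ∀ D ∈ T, (g, h) ∈ (D : Set (V₁ × V₂)) := by
  intro D hD
  obtain ⟨C₁, hC₁T, hC₁v⟩ := hC₁
  obtain ⟨C₂, hC₂T, hC₂v⟩ := hC₂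
  by_cases e₁ : D = C₁
  · rw [e₁, hC₁v]; exact ⟨hg, rfl⟩
  by_cases e₂ : D = C₂
  · rw [e₂, hC₂v]; exact ⟨rfl, hh⟩
  obtain ⟨⟨x₁, y₁⟩, hp₁D, hp₁⟩ := (hT hD hC₁T e₁).2
  obtain ⟨⟨x₂, y₂⟩, hp₂D, hp₂⟩ := (hT hD hC₂T e₂).2
  rw [hC₁v] at hp₁
  rw [hC₂v] at hp₂
  obtain ⟨hx₁Q, hy₁h⟩ := hp₁
  obtain ⟨hx₂g, hy₂R⟩ := hp₂
  simp only [Set.mem_singleton_iff] at hy₁h hx₂g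
  rcases maxClique_cases D.2 with ⟨Q', hQ', h', hDv⟩ | ⟨g', R', hR', hDv⟩
  · rw [hDv] at hp₁D hp₂D ⊢
    obtain ⟨_, hy₁h'⟩ := hp₁D
    obtain ⟨hx₂Q', hy₂h'⟩ := hp₂D
    simp only [Set.mem_singleton_iff] at hy₁h' hy₂h'
    exact ⟨hx₂g ▸ hx₂Q', Set.mem_singleton_iff.2 (hy₁h' ▸ hy₁h).symm⟩
  · rw [hDv] at hp₁D hp₂D ⊢
    obtain ⟨hx₁g', hy₁R'⟩ := hp₁D
    obtain ⟨hx₂g', _⟩ := hp₂D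
    simp only [Set.mem_singleton_iff] at hx₁g' hx₂g'
    exact ⟨Set.mem_singleton_iff.2 (hx₂g' ▸ hx₂g).symm, hy₁h ▸ hy₁R'⟩

lemma Fam_maxClique (hiso₁ : ∀ v : V₁, ∃ u : V₁, G₁.Adj v u)
    (hiso₂ : ∀ v : V₂, ∃ u : V₂, G₂.Adj v u) (g : V₁) (h : V₂) :
    Fam G₁ G₂ g h ∈ maxCliques (cliqueGraph (G₁ □ G₂)) := by
  refine ⟨Fam_isClique g h, fun T hT hsub => ?_⟩
  refine Set.Subset.antisymm hsub fun D hD => ?_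
  obtain ⟨C₁, hC₁F, Q, hQ, hg, hC₁v⟩ := exists_Fam_h hiso₁ g h
  obtain ⟨C₂, hC₂F, R, hR, hh, hC₂v⟩ := exists_Fam_v hiso₂ g h
  exact common_point hT ⟨C₁, hsub hC₁F, hC₁v⟩ ⟨C₂, hsub hC₂F, hC₂v⟩ hg hh D hD

lemma Fam_inj (hiso₁ : ∀ v : V₁, ∃ u : V₁, G₁.Adj v u)
    (hiso₂ : ∀ v : V₂, ∃ u : V₂, G₂.Adj v u) {g g' : V₁} {h h' : V₂}
    (heq : Fam G₁ G₂ g h = Fam G₁ G₂ g' h') : g = g' ∧ h = h' := by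
  obtain ⟨C₁, hC₁F, Q, hQ, hg, hC₁v⟩ := exists_Fam_h hiso₁ g h
  obtain ⟨C₂, hC₂F, R, hR, hh, hC₂v⟩ := exists_Fam_v hiso₂ g h
  have h₁ : (g', h') ∈ (C₁ : Set (V₁ × V₂)) := heq ▸ hC₁F
  have h₂ : (g', h') ∈ (C₂ : Set (V₁ × V₂)) := heq ▸ hC₂F
  rw [hC₁v] at h₁
  rw [hC₂v] at h₂
  exact ⟨h₂.1.symm, h₁.2.symm⟩

lemma maxClique_K_eq_Fam (hH₁ : CliqueHelly G₁) (hH₂ : CliqueHelly G₂)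
    (hiso₁ : ∀ v : V₁, ∃ u : V₁, G₁.Adj v u)
    (hiso₂ : ∀ v : V₂, ∃ u : V₂, G₂.Adj v u)
    {T : Set ↥(maxCliques (G₁ □ G₂))}
    (hT : T ∈ maxCliques (cliqueGraph (G₁ □ G₂))) :
    ∃ g : V₁, ∃ h : V₂, T = Fam G₁ G₂ g h := by
  suffices hsuf : ∃ g : V₁, ∃ h : V₂, T ⊆ Fam G₁ G₂ g h by
    obtain ⟨g, h, hs⟩ := hsuf
    exact ⟨g, h, hT.2 _ (Fam_isClique g h) hs⟩
  have hTne : T.Nonempty := by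
    by_contra hne
    rw [Set.not_nonempty_iff_eq_empty] at hne
    obtain ⟨g⟩ := (inferInstance : Nonempty V₁)
    obtain ⟨h⟩ := (inferInstance : Nonempty V₂)
    obtain ⟨C, hCF, _⟩ := exists_Fam_h (G₂ := G₂) hiso₁ g h
    have h2 := hT.2 {C} (Set.pairwise_singleton _ _)
      (by rw [hne]; exact Set.empty_subset _)
    rw [hne] at h2
    exact (Set.singleton_ne_empty C) h2.symm
  by_cases hvert : ∃ C ∈ T, ∃ g : V₁, ∃ R ∈ maxCliques G₂,
      (C : Set (V₁ × V₂)) = ({g} : Set V₁) ×ˢ R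
  · obtain ⟨C₂, hC₂T, g, R, hR, hC₂v⟩ := hvert
    by_cases hhor : ∃ C ∈ T, ∃ Q ∈ maxCliques G₁, ∃ h : V₂,
        (C : Set (V₁ × V₂)) = Q ×ˢ ({h} : Set V₂)
    · -- mixed case
      obtain ⟨C₁, hC₁T, Q, hQ, h, hC₁v⟩ := hhor
      have hne : C₁ ≠ C₂ := by
        intro e
        obtain ⟨a, ha, b, hb, hab⟩ := maxClique_nontrivial hiso₁ hQ
        have h1 : (a, h) ∈ (C₂ : Set (V₁ × V₂)) := by rw [← e, hC₁v]; exact ⟨ha, rfl⟩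
        have h2 : (b, h) ∈ (C₂ : Set (V₁ × V₂)) := by rw [← e, hC₁v]; exact ⟨hb, rfl⟩
        rw [hC₂v] at h1 h2
        exact hab (h1.1.trans h2.1.symm)
      obtain ⟨⟨x, y⟩, hxy₁, hxy₂⟩ := (hT.1 hC₁T hC₂T hne).2
      rw [hC₁v] at hxy₁
      rw [hC₂v] at hxy₂
      obtain ⟨hxQ, hyh⟩ := hxy₁
      obtain ⟨hxg, hyR⟩ := hxy₂
      simp only [Set.mem_singleton_iff] at hyh hxg
      refine ⟨g, h, fun D hD =>
        common_point hT.1 ⟨C₁, hC₁T, hC₁v⟩ ⟨C₂, hC₂T, hC₂v⟩ (hxg ▸ hxQ) (hyh ▸ hyR) D hD⟩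
    · -- all vertical, at column g₀
      push_neg at hhor
      have hcol : ∀ C ∈ T, ∃ R ∈ maxCliques G₂,
          (C : Set (V₁ × V₂)) = ({g} : Set V₁) ×ˢ R := by
        intro C hC
        rcases maxClique_cases C.2 with ⟨Q', hQ', h', hCv⟩ | ⟨g', R', hR', hCv⟩
        · exact absurd hCv (hhor C hC Q' hQ' h')
        · refine ⟨R', hR', ?_⟩
          have hg' : g' = g := by
            by_cases e : C = C₂
            · obtain ⟨r, hr⟩ := maxClique_nonempty_s14 hR'
              have : (g', r) ∈ (C₂ : Set (V₁ × V₂)) := by rw [← e, hCv]; exact ⟨rfl, hr⟩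
              rw [hC₂v] at this
              exact this.1
            · obtain ⟨⟨x, y⟩, hxyC, hxyC₂⟩ := (hT.1 hC hC₂T e).2
              rw [hCv] at hxyC
              rw [hC₂v] at hxyC₂
              exact hxyC.1.symm.trans hxyC₂.1
          rw [hCv, hg']
      set ℛ : Set (Set V₂) := {R | R ∈ maxCliques G₂ ∧
        ∃ C ∈ T, (C : Set (V₁ × V₂)) = ({g} : Set V₁) ×ˢ R} with hℛ
      have hRne : ℛ.Nonempty := by
        obtain ⟨C₀, hC₀T⟩ := hTne
        obtain ⟨R₀, hR₀, hC₀v⟩ := hcol C₀ hC₀T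
        exact ⟨R₀, hR₀, C₀, hC₀T, hC₀v⟩
      have hInt := hH₂ ℛ hRne (fun R hR => hR.1) ?_
      · obtain ⟨h₀, hh₀⟩ := hInt
        refine ⟨g, h₀, fun C hC => ?_⟩
        obtain ⟨R', hR', hCv⟩ := hcol C hC
        have hmem : R' ∈ ℛ := ⟨hR', C, hC, hCv⟩
        have : h₀ ∈ R' := by
          simp only [Set.mem_iInter] at hh₀
          exact hh₀ R' hmem
        show (g, h₀) ∈ (C : Set (V₁ × V₂))
        rw [hCv]
        exact ⟨rfl, this⟩
      · rintro R ⟨hRm, C, hCT, hCv⟩ R' ⟨hR'm, C', hC'T, hC'v⟩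
        by_cases e : C = C'
        · have : ({g} : Set V₁) ×ˢ R = ({g} : Set V₁) ×ˢ R' := by rw [← hCv, e, hC'v]
          have hRR' : R = R' := by
            ext y
            have h1 : ((g, y) : V₁ × V₂) ∈ ({g} : Set V₁) ×ˢ R ↔
                ((g, y) : V₁ × V₂) ∈ ({g} : Set V₁) ×ˢ R' := by rw [this]
            simpa using h1
          rw [hRR']
          rw [Set.inter_self]
          obtain ⟨r, hr⟩ := maxClique_nonempty_s14 hR'm
          exact ⟨r, hr⟩
        · obtain ⟨⟨x, y⟩, hxyC, hxyC'⟩ := (hT.1 hCT hC'T e).2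
          rw [hCv] at hxyC
          rw [hC'v] at hxyC'
          exact ⟨y, hxyC.2, hxyC'.2⟩
  · -- no vertical: all horizontal, at level h₀
    push_neg at hvert
    have hhor : ∀ C ∈ T, ∃ Q ∈ maxCliques G₁, ∃ h : V₂,
        (C : Set (V₁ × V₂)) = Q ×ˢ ({h} : Set V₂) := by
      intro C hC
      rcases maxClique_cases C.2 with ⟨Q', hQ', h', hCv⟩ | ⟨g', R', hR', hCv⟩
      · exact ⟨Q', hQ', h', hCv⟩
      · exact absurd hCv (hvert C hC g' R' hR')
    obtain ⟨C₀, hC₀T⟩ := hTne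
    obtain ⟨Q₀, hQ₀, h₀, hC₀v⟩ := hhor C₀ hC₀T
    have hlev : ∀ C ∈ T, ∃ Q ∈ maxCliques G₁,
        (C : Set (V₁ × V₂)) = Q ×ˢ ({h₀} : Set V₂) := by
      intro C hC
      obtain ⟨Q', hQ', h', hCv⟩ := hhor C hC
      refine ⟨Q', hQ', ?_⟩
      have hh' : h' = h₀ := by
        by_cases e : C = C₀
        · obtain ⟨q, hq⟩ := maxClique_nonempty_s14 hQ'
          have : (q, h') ∈ (C₀ : Set (V₁ × V₂)) := by rw [← e, hCv]; exact ⟨hq, rfl⟩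
          rw [hC₀v] at this
          exact this.2
        · obtain ⟨⟨x, y⟩, hxyC, hxyC₀⟩ := (hT.1 hC hC₀T e).2
          rw [hCv] at hxyC
          rw [hC₀v] at hxyC₀
          exact hxyC.2.symm.trans hxyC₀.2
      rw [hCv, hh']
    set 𝒬 : Set (Set V₁) := {Q | Q ∈ maxCliques G₁ ∧
      ∃ C ∈ T, (C : Set (V₁ × V₂)) = Q ×ˢ ({h₀} : Set V₂)} with h𝒬
    have hQne : 𝒬.Nonempty := by
      obtain ⟨Q', hQ', hC₀v'⟩ := hlev C₀ hC₀T
      exact ⟨Q', hQ', C₀, hC₀T, hC₀v'⟩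
    have hInt := hH₁ 𝒬 hQne (fun Q hQ => hQ.1) ?_
    · obtain ⟨g₀, hg₀⟩ := hInt
      refine ⟨g₀, h₀, fun C hC => ?_⟩
      obtain ⟨Q', hQ', hCv⟩ := hlev C hC
      have hmem : Q' ∈ 𝒬 := ⟨hQ', C, hC, hCv⟩
      have : g₀ ∈ Q' := by
        simp only [Set.mem_iInter] at hg₀
        exact hg₀ Q' hmem
      show (g₀, h₀) ∈ (C : Set (V₁ × V₂))
      rw [hCv]
      exact ⟨this, rfl⟩
    · rintro Q ⟨hQm, C, hCT, hCv⟩ Q' ⟨hQ'm, C', hC'T, hC'v⟩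
      by_cases e : C = C'
      · have : Q ×ˢ ({h₀} : Set V₂) = Q' ×ˢ ({h₀} : Set V₂) := by rw [← hCv, e, hC'v]
        have hQQ' : Q = Q' := by
          ext q
          have h1 : ((q, h₀) : V₁ × V₂) ∈ Q ×ˢ ({h₀} : Set V₂) ↔
              ((q, h₀) : V₁ × V₂) ∈ Q' ×ˢ ({h₀} : Set V₂) := by rw [this]
          simpa using h1
        rw [hQQ']
        rw [Set.inter_self]
        obtain ⟨q, hq⟩ := maxClique_nonempty_s14 hQ'm
        exact ⟨q, hq⟩
      · obtain ⟨⟨x, y⟩, hxyC, hxyC'⟩ := (hT.1 hCT hC'T e).2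
        rw [hCv] at hxyC
        rw [hC'v] at hxyC'
        exact ⟨x, hxyC.1, hxyC'.1⟩

end Main

/-- If `G₁`, `G₂` are finite clique-Helly graphs, each with at least two vertices and
no isolated vertices, then `K²(G₁ □ G₂) ≅ G₁ □ G₂`. -/
theorem cliqueGraph_sq_boxProd {V₁ V₂ : Type u} [Finite V₁] [Finite V₂]
    [Nontrivial V₁] [Nontrivial V₂] (G₁ : SimpleGraph V₁) (G₂ : SimpleGraph V₂)
    (hH₁ : CliqueHelly G₁) (hH₂ : CliqueHelly G₂)
    (hiso₁ : ∀ v : V₁, ∃ u : V₁, G₁.Adj v u) (hiso₂ : ∀ v : V₂, ∃ u : V₂, G₂.Adj v u) :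
    Nonempty (cliqueGraph (cliqueGraph (G₁ □ G₂)) ≃g (G₁ □ G₂)) := by
  classical
  -- the map sending a vertex to the family of cliques through it
  let f : V₁ × V₂ → ↥(maxCliques (cliqueGraph (G₁ □ G₂))) :=
    fun p => ⟨Fam G₁ G₂ p.1 p.2, Fam_maxClique hiso₁ hiso₂ p.1 p.2⟩
  have hfinj : Function.Injective f := by
    rintro ⟨g, h⟩ ⟨g', h'⟩ hfe
    have : Fam G₁ G₂ g h = Fam G₁ G₂ g' h' := congrArg Subtype.val hfe
    obtain ⟨h1, h2⟩ := Fam_inj hiso₁ hiso₂ this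
    exact Prod.ext h1 h2
  have hfsurj : Function.Surjective f := by
    rintro ⟨T, hT⟩
    obtain ⟨g, h, hgh⟩ := maxClique_K_eq_Fam hH₁ hH₂ hiso₁ hiso₂ hT
    exact ⟨(g, h), Subtype.ext hgh.symm⟩
  let e : V₁ × V₂ ≃ ↥(maxCliques (cliqueGraph (G₁ □ G₂))) :=
    Equiv.ofBijective f ⟨hfinj, hfsurj⟩
  have hrel : ∀ a b : V₁ × V₂,
      (cliqueGraph (cliqueGraph (G₁ □ G₂))).Adj (e a) (e b) ↔ (G₁ □ G₂).Adj a b := by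
    rintro ⟨g, h⟩ ⟨g', h'⟩
    constructor
    · rintro ⟨hne, ⟨C, hC₁, hC₂⟩⟩
      have hpne : ((g, h) : V₁ × V₂) ≠ (g', h') := by
        intro hp
        exact hne (by rw [show ((g,h) : V₁ × V₂) = (g',h') from hp])
      have hgh : ((g, h) : V₁ × V₂) ∈ (C : Set (V₁ × V₂)) := hC₁
      have hgh' : ((g', h') : V₁ × V₂) ∈ (C : Set (V₁ × V₂)) := hC₂
      rcases maxClique_cases C.2 with ⟨Q, hQ, h₀, hCv⟩ | ⟨g₀, R, hR, hCv⟩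
      · rw [hCv] at hgh hgh'
        obtain ⟨hgQ, hh₀⟩ := hgh
        obtain ⟨hg'Q, hh'₀⟩ := hgh'
        simp only [Set.mem_singleton_iff] at hh₀ hh'₀
        have hhh : h = h' := hh₀.trans hh'₀.symm
        have hgg : g ≠ g' := fun hg => hpne (Prod.ext hg hhh)
        exact (SimpleGraph.boxProd_adj).2 (Or.inl ⟨hQ.1 hgQ hg'Q hgg, hhh⟩)
      · rw [hCv] at hgh hgh'
        obtain ⟨hg₀, hhR⟩ := hgh
        obtain ⟨hg'₀, hh'R⟩ := hgh'
        simp only [Set.mem_singleton_iff] at hg₀ hg'₀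
        have hgg : g = g' := hg₀.trans hg'₀.symm
        have hhh : h ≠ h' := fun hh => hpne (Prod.ext hgg hh)
        exact (SimpleGraph.boxProd_adj).2 (Or.inr ⟨hR.1 hhR hh'R hhh, hgg⟩)
    · intro hadj
      have hpair : (G₁ □ G₂).IsClique {((g, h) : V₁ × V₂), (g', h')} :=
        (SimpleGraph.isClique_pair).2 fun _ => hadj
      obtain ⟨C, hC, hsub⟩ := exists_maxClique_superset (G₁ □ G₂) hpair
      refine ⟨?_, ⟨⟨C, hC⟩, hsub (Set.mem_insert _ _),
        hsub (Set.mem_insert_iff.2 (Or.inr rfl))⟩⟩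
      intro hfe
      have : Fam G₁ G₂ g h = Fam G₁ G₂ g' h' := congrArg Subtype.val hfe
      obtain ⟨h1, h2⟩ := Fam_inj hiso₁ hiso₂ this
      exact hadj.ne (Prod.ext h1 h2)
  exact ⟨(SimpleGraph.Iso.symm ⟨e, by intro a b; exact hrel a b⟩ :)⟩
end

section
/- Let G₁ and G₂ be finite clique-Helly simple graphs, each having at least two vertices and no isolated vertices, and let G = G₁ □ G₂. Then for every vertex v of G, the family A_v = { Q : Q a clique of G with v ∈ Q } is a clique of the clique graph K(G), i.e., a maximal family of pairwise intersecting cliques of G. -/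
open SimpleGraph

universe u v

lemma exists_maxClique_pair {V : Type u} [Finite V] (G : SimpleGraph V) {a u : V}
    (h : G.Adj a u) : ∃ s, IsMaxClique G s ∧ a ∈ s ∧ u ∈ s := by
  classical
  let S : Set (Set V) := {s | G.IsClique s ∧ a ∈ s ∧ u ∈ s}
  have hne : S.Nonempty := by
    refine ⟨{a, u}, ?_, by simp, by simp⟩
    rw [SimpleGraph.isClique_pair]
    exact fun _ => h
  obtain ⟨s, hs, hmax⟩ := Set.Finite.exists_maximalFor id S (Set.toFinite S) hne
  refine ⟨s, ⟨hs.1, ?_⟩, hs.2.1, hs.2.2⟩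
  intro t ht hst
  exact Set.Subset.antisymm hst (hmax ⟨ht, hst hs.2.1, hst hs.2.2⟩ hst)

lemma prod_left_maxClique {V₁ V₂ : Type u} (G₁ : SimpleGraph V₁) (G₂ : SimpleGraph V₂)
    {D : Set V₁} (hD : IsMaxClique G₁ D) {c₁ c₂ : V₁} (h₁ : c₁ ∈ D) (h₂ : c₂ ∈ D)
    (hne : c₁ ≠ c₂) (b : V₂) : IsMaxClique (G₁ □ G₂) (D ×ˢ ({b} : Set V₂)) := by
  constructor
  · intro x hx y hy hxy
    obtain ⟨hx1, hx2⟩ := hx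
    obtain ⟨hy1, hy2⟩ := hy
    have hx2 : x.2 = b := hx2
    have hy2 : y.2 = b := hy2
    have hne1 : x.1 ≠ y.1 := by
      intro hh
      exact hxy (Prod.ext hh (hx2.trans hy2.symm))
    exact SimpleGraph.boxProd_adj.mpr (Or.inl ⟨hD.1 hx1 hy1 hne1, hx2.trans hy2.symm⟩)
  · intro t ht hsub
    refine Set.Subset.antisymm hsub ?_
    intro w hw
    have hc : ∀ c ∈ D, (c, b) ∈ t := fun c hc => hsub ⟨hc, rfl⟩
    have hb : w.2 = b := by
      by_contra hb
      have key : ∀ c ∈ D, w.1 = c := by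
        intro c hcD
        have hwne : w ≠ (c, b) := fun hh => hb (by rw [hh])
        rcases SimpleGraph.boxProd_adj.mp (ht hw (hc c hcD) hwne) with ⟨_, h2⟩ | ⟨_, h1⟩
        · exact absurd h2 hb
        · exact h1
      exact hne ((key c₁ h₁).symm.trans (key c₂ h₂))
    have hclique : G₁.IsClique (insert w.1 D) := by
      intro p hp q hq hpq
      have step : ∀ x ∈ D, w.1 ≠ x → G₁.Adj w.1 x := by
        intro x hx hwx
        have hwne : w ≠ (x, b) := fun hh => hwx (by rw [hh])
        rcases SimpleGraph.boxProd_adj.mp (ht hw (hc x hx) hwne) with ⟨h1, _⟩ | ⟨h1, _⟩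
        · exact h1
        · exact absurd (hb ▸ h1) (G₂.irrefl)
      rcases hp with hp | hp <;> rcases hq with hq | hq
      · exact absurd (hp.trans hq.symm) hpq
      · exact hp ▸ step q hq (hp ▸ hpq)
      · subst hq
        exact (step p hp (Ne.symm hpq)).symm
      · exact hD.1 hp hq hpq
    have heq := hD.2 _ hclique (Set.subset_insert _ _)
    have hw1 : w.1 ∈ D := heq ▸ Set.mem_insert _ _
    exact ⟨hw1, hb⟩

lemma prod_right_maxClique {V₁ V₂ : Type u} (G₁ : SimpleGraph V₁) (G₂ : SimpleGraph V₂)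
    {D : Set V₂} (hD : IsMaxClique G₂ D) {c₁ c₂ : V₂} (h₁ : c₁ ∈ D) (h₂ : c₂ ∈ D)
    (hne : c₁ ≠ c₂) (a : V₁) : IsMaxClique (G₁ □ G₂) (({a} : Set V₁) ×ˢ D) := by
  constructor
  · intro x hx y hy hxy
    obtain ⟨hx1, hx2⟩ := hx
    obtain ⟨hy1, hy2⟩ := hy
    have hx1 : x.1 = a := hx1
    have hy1 : y.1 = a := hy1
    have hne2 : x.2 ≠ y.2 := by
      intro hh
      exact hxy (Prod.ext (hx1.trans hy1.symm) hh)
    exact SimpleGraph.boxProd_adj.mpr (Or.inr ⟨hD.1 hx2 hy2 hne2, hx1.trans hy1.symm⟩)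
  · intro t ht hsub
    refine Set.Subset.antisymm hsub ?_
    intro w hw
    have hc : ∀ c ∈ D, (a, c) ∈ t := fun c hc => hsub ⟨rfl, hc⟩
    have hb : w.1 = a := by
      by_contra hb
      have key : ∀ c ∈ D, w.2 = c := by
        intro c hcD
        have hwne : w ≠ (a, c) := fun hh => hb (by rw [hh])
        rcases SimpleGraph.boxProd_adj.mp (ht hw (hc c hcD) hwne) with ⟨_, h2⟩ | ⟨_, h1⟩
        · exact h2
        · exact absurd h1 hb
      exact hne ((key c₁ h₁).symm.trans (key c₂ h₂))
    have hclique : G₂.IsClique (insert w.2 D) := by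
      intro p hp q hq hpq
      have step : ∀ x ∈ D, w.2 ≠ x → G₂.Adj w.2 x := by
        intro x hx hwx
        have hwne : w ≠ (a, x) := fun hh => hwx (by rw [hh])
        rcases SimpleGraph.boxProd_adj.mp (ht hw (hc x hx) hwne) with ⟨h1, _⟩ | ⟨h1, _⟩
        · exact absurd (hb ▸ h1) (G₁.irrefl)
        · exact h1
      rcases hp with hp | hp <;> rcases hq with hq | hq
      · exact absurd (hp.trans hq.symm) hpq
      · exact hp ▸ step q hq (hp ▸ hpq)
      · subst hq
        exact (step p hp (Ne.symm hpq)).symm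
      · exact hD.1 hp hq hpq
    have heq := hD.2 _ hclique (Set.subset_insert _ _)
    have hw2 : w.2 ∈ D := heq ▸ Set.mem_insert _ _
    exact ⟨hb, hw2⟩

/-- Let `G = G₁ □ G₂` where `G₁`, `G₂` are finite clique-Helly graphs, each with at least
two vertices and no isolated vertices. Then for every vertex `v` of `G`, the family of all
cliques of `G` containing `v` is a clique of the clique graph `K(G)`. -/
theorem cliquesThrough_vertex_maxClique_boxProd {V₁ V₂ : Type u} [Finite V₁] [Finite V₂]
    [Nontrivial V₁] [Nontrivial V₂] (G₁ : SimpleGraph V₁) (G₂ : SimpleGraph V₂)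
    (hH₁ : CliqueHelly G₁) (hH₂ : CliqueHelly G₂)
    (hiso₁ : ∀ v : V₁, ∃ u : V₁, G₁.Adj v u) (hiso₂ : ∀ v : V₂, ∃ u : V₂, G₂.Adj v u)
    (v : V₁ × V₂) :
    {Q : ↥(maxCliques (G₁ □ G₂)) | v ∈ (Q : Set (V₁ × V₂))}
      ∈ maxCliques (cliqueGraph (G₁ □ G₂)) := by
  obtain ⟨a, b⟩ := v
  obtain ⟨u₁, hu₁⟩ := hiso₁ a
  obtain ⟨u₂, hu₂⟩ := hiso₂ b
  obtain ⟨D₁, hD₁, ha₁, hu₁'⟩ := exists_maxClique_pair G₁ hu₁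
  obtain ⟨D₂, hD₂, hb₂, hu₂'⟩ := exists_maxClique_pair G₂ hu₂
  have hR₁ : IsMaxClique (G₁ □ G₂) (D₁ ×ˢ ({b} : Set V₂)) :=
    prod_left_maxClique G₁ G₂ hD₁ ha₁ hu₁' hu₁.ne b
  have hR₂ : IsMaxClique (G₁ □ G₂) (({a} : Set V₁) ×ˢ D₂) :=
    prod_right_maxClique G₁ G₂ hD₂ hb₂ hu₂' hu₂.ne a
  constructor
  · intro Q hQ R hR hQR
    exact (⟨hQR, ⟨(a, b), hQ, hR⟩⟩ : Q ≠ R ∧ ((Q : Set (V₁ × V₂)) ∩ (R : Set (V₁ × V₂))).Nonempty)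
  · intro t ht hAt
    refine Set.Subset.antisymm hAt ?_
    intro Q hQt
    show (a, b) ∈ (Q : Set (V₁ × V₂))
    by_contra hv
    let R₁ : ↥(maxCliques (G₁ □ G₂)) := ⟨_, hR₁⟩
    let R₂ : ↥(maxCliques (G₁ □ G₂)) := ⟨_, hR₂⟩
    have hR₁A : R₁ ∈ {Q : ↥(maxCliques (G₁ □ G₂)) | (a, b) ∈ (Q : Set (V₁ × V₂))} :=
      ⟨ha₁, rfl⟩
    have hR₂A : R₂ ∈ {Q : ↥(maxCliques (G₁ □ G₂)) | (a, b) ∈ (Q : Set (V₁ × V₂))} :=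
      ⟨rfl, hb₂⟩
    have hQR₁ : Q ≠ R₁ := by
      intro hh; apply hv; rw [hh]; exact ⟨ha₁, rfl⟩
    have hQR₂ : Q ≠ R₂ := by
      intro hh; apply hv; rw [hh]; exact ⟨rfl, hb₂⟩
    obtain ⟨p, hpQ, hpR₁⟩ := (show Q ≠ R₁ ∧ ((Q : Set (V₁ × V₂)) ∩ (R₁ : Set (V₁ × V₂))).Nonempty from ht hQt (hAt hR₁A) hQR₁).2
    obtain ⟨q, hqQ, hqR₂⟩ := (show Q ≠ R₂ ∧ ((Q : Set (V₁ × V₂)) ∩ (R₂ : Set (V₁ × V₂))).Nonempty from ht hQt (hAt hR₂A) hQR₂).2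
    have hp2 : p.2 = b := hpR₁.2
    have hq1 : q.1 = a := hqR₂.1
    by_cases hpq : p = q
    · exact hv ((Prod.ext (hpq ▸ hq1) hp2 : p = (a, b)) ▸ hpQ)
    · have hQc : (G₁ □ G₂).IsClique (Q : Set (V₁ × V₂)) := Q.2.1
      rcases SimpleGraph.boxProd_adj.mp (hQc hpQ hqQ hpq) with ⟨_, h2⟩ | ⟨_, h1⟩
      · exact hv ((Prod.ext hq1 (h2 ▸ hp2) : q = (a, b)) ▸ hqQ)
      · exact hv ((Prod.ext (h1.trans hq1) hp2 : p = (a, b)) ▸ hpQ)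
end
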